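/- arXiv:1502.06170 — 5 statements merged into one kernel-verified Lean document; each statement's English description precedes it below -/
import Mathlib

section
/- (Proposition 3.A.) Let α ∈ (0,1) and p > 1/α. For every ε ∈ (0, (α − 1/p)/2) there exist a function f₀ ∈ L_p(0,1) and a constant C(α,p) > 0 such that for every h ∈ (0,1), the modulus of continuity over (0,1) satisfies ω(I^α[f₀], h) ≥ C(α,p) · h^{α − 1/p + ε}. (One may take f₀(x) = x^{−β} with β = 1/p − ε, for which C(α,p) = B(1−β,α)/Γ(α).) -/
open MeasureTheory Set

/-- Modulus of continuity of `g` over the set `X`. -/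
noncomputable def omegaOn (X : Set ℝ) (g : ℝ → ℝ) (h : ℝ) : ℝ :=
  sSup {v | ∃ x ∈ X, ∃ y ∈ X, |x - y| ≤ h ∧ v = |g x - g y|}

/-- Riemann–Liouville fractional integral of order `α`:
`I^α[f](x) = (1/Γ(α)) ∫_0^x f(t) (x-t)^(α-1) dt`. -/
noncomputable def RLint (α : ℝ) (f : ℝ → ℝ) (x : ℝ) : ℝ :=
  (1 / Real.Gamma α) * ∫ t in (0:ℝ)..x, f t * (x - t) ^ (α - 1)

lemma beta_integrable {a b : ℝ} (ha : -1 < a) (hb : -1 < b) :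
    IntervalIntegrable (fun s : ℝ => s ^ a * (1 - s) ^ b) volume 0 1 := by
  have h1 : IntervalIntegrable (fun s : ℝ => s ^ a * (1 - s) ^ b) volume 0 (1/2) := by
    refine (intervalIntegral.intervalIntegrable_rpow' ha).mul_continuousOn ?_
    refine (continuous_const.sub continuous_id).continuousOn.rpow_const ?_
    intro x hx
    rw [uIcc_of_le (by norm_num : (0:ℝ) ≤ 1/2)] at hx
    left
    have : x ≤ 1/2 := hx.2
    simp only [Pi.sub_apply, id_def]
    intro hc
    nlinarith [sub_eq_zero.mp hc]
  have h2 : IntervalIntegrable (fun s : ℝ => s ^ a * (1 - s) ^ b) volume (1/2) 1 := by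
    have hint : IntervalIntegrable (fun s : ℝ => (1 - s) ^ b) volume (1/2) 1 := by
      have := (intervalIntegral.intervalIntegrable_rpow' hb (a := 0) (b := 1/2)).comp_sub_left 1
      norm_num at this
      exact this.symm
    refine hint.continuousOn_mul ?_
    refine continuousOn_id.rpow_const ?_
    intro x hx
    rw [uIcc_of_le (by norm_num : (1:ℝ)/2 ≤ 1)] at hx
    left
    have : (1:ℝ)/2 ≤ x := hx.1
    simp only [id_def]
    intro hc
    norm_num [hc] at this
  exact h1.trans h2

theorem exponent_sharp_on_unit_interval (α p : ℝ) (hα : α ∈ Set.Ioo (0:ℝ) 1)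
    (hp : 1 / α < p) :
    ∀ ε ∈ Set.Ioo (0:ℝ) ((α - 1 / p) / 2),
      ∃ f₀ : ℝ → ℝ, (∀ x : ℝ, x ∉ Set.Ioo (0:ℝ) 1 → f₀ x = 0) ∧
        MeasureTheory.IntegrableOn (fun x => |f₀ x| ^ p) (Set.Ioo 0 1) ∧
        ∃ C > (0:ℝ), ∀ h ∈ Set.Ioo (0:ℝ) 1,
          C * h ^ (α - 1 / p + ε) ≤ omegaOn (Set.Ioo 0 1) (RLint α f₀) h := by
  obtain ⟨hα0, hα1⟩ := hα
  intro ε hε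
  obtain ⟨hε0, hε2⟩ := hε
  have hp0 : 0 < p := lt_trans (by positivity) hp
  have hpα : 1 / p < α := by
    rw [div_lt_iff₀ hα0] at hp
    rw [div_lt_iff₀ hp0]
    nlinarith
  set β : ℝ := 1 / p - ε with hβ
  set γ : ℝ := α - 1 / p + ε with hγ
  have hγ0 : 0 < γ := by simp only [hγ]; linarith
  have hβ1 : β < 1 := by
    have : 1 / p < 1 := lt_trans hpα hα1
    simp only [hβ]; linarith
  have hαβγ : α - β = γ := by simp only [hβ, hγ]; ring
  set f₀ : ℝ → ℝ := Set.indicator (Set.Ioo (0:ℝ) 1) (fun x => x ^ (-β)) with hf₀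
  refine ⟨f₀, fun x hx => Set.indicator_of_notMem hx _, ?_, ?_⟩
  · -- integrability of |f₀|^p
    have hexp : (-1:ℝ) < -β * p := by
      have : -β * p = ε * p - 1 := by simp only [hβ]; field_simp; ring
      rw [this]
      nlinarith
    have hint : IntegrableOn (fun x : ℝ => x ^ (-β * p)) (Set.Ioo 0 1) volume := by
      have := intervalIntegral.intervalIntegrable_rpow' hexp (a := 0) (b := 1)
      rwa [intervalIntegrable_iff_integrableOn_Ioo_of_le (by norm_num)] at this
    refine hint.congr_fun ?_ measurableSet_Ioo
    intro x hx
    have hx0 : 0 < x := hx.1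
    have hfx : f₀ x = x ^ (-β) := Set.indicator_of_mem hx _
    show x ^ (-β * p) = |f₀ x| ^ p
    rw [hfx, abs_of_nonneg (Real.rpow_nonneg hx0.le _), ← Real.rpow_mul hx0.le]
  · -- the modulus bound
    set K : ℝ := ∫ s in (0:ℝ)..1, s ^ (-β) * (1 - s) ^ (α - 1) with hK
    have hbetaInt : IntervalIntegrable (fun s : ℝ => s ^ (-β) * (1 - s) ^ (α - 1)) volume 0 1 :=
      beta_integrable (by linarith) (by linarith)
    have hKpos : 0 < K := by
      refine intervalIntegral.intervalIntegral_pos_of_pos_on hbetaInt ?_ one_pos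
      intro s hs
      exact mul_pos (Real.rpow_pos_of_pos hs.1 _) (Real.rpow_pos_of_pos (by linarith [hs.2]) _)
    set c : ℝ := (1 / Real.Gamma α) * K with hc
    have hΓ : 0 < Real.Gamma α := Real.Gamma_pos_of_pos hα0
    have hcpos : 0 < c := by positivity
    -- key formula : RLint α f₀ x = c * x ^ γ for x ∈ Ioo 0 1
    have key : ∀ x ∈ Set.Ioo (0:ℝ) 1, RLint α f₀ x = c * x ^ γ := by
      intro x hx
      have hx0 : 0 < x := hx.1
      have hx1 : x < 1 := hx.2
      have step1 : (∫ t in (0:ℝ)..x, f₀ t * (x - t) ^ (α - 1))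
          = ∫ t in (0:ℝ)..x, t ^ (-β) * (x - t) ^ (α - 1) := by
        refine intervalIntegral.integral_congr_ae ?_
        refine Filter.Eventually.of_forall ?_
        intro t ht
        rw [uIoc_of_le hx0.le] at ht
        have hmem : t ∈ Set.Ioo (0:ℝ) 1 := ⟨ht.1, lt_of_le_of_lt ht.2 hx1⟩
        rw [hf₀, Set.indicator_of_mem hmem]
      have step2 : (∫ s in (0:ℝ)..1, (fun u => u ^ (-β) * (x - u) ^ (α - 1)) (s * x))
          = x⁻¹ • ∫ u in (0:ℝ)..x, u ^ (-β) * (x - u) ^ (α - 1) := by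
        have := intervalIntegral.integral_comp_mul_right
          (fun u => u ^ (-β) * (x - u) ^ (α - 1)) (ne_of_gt hx0) (a := 0) (b := 1)
        simpa using this
      have step3 : (∫ s in (0:ℝ)..1, (fun u => u ^ (-β) * (x - u) ^ (α - 1)) (s * x))
          = (x ^ (-β) * x ^ (α - 1)) * K := by
        rw [hK, ← intervalIntegral.integral_const_mul]
        refine intervalIntegral.integral_congr ?_
        intro s hs
        rw [uIcc_of_le (by norm_num : (0:ℝ) ≤ 1)] at hs
        have hs0 : 0 ≤ s := hs.1
        have hs1 : s ≤ 1 := hs.2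
        simp only
        rw [Real.mul_rpow hs0 hx0.le]
        have : x - s * x = x * (1 - s) := by ring
        rw [this, Real.mul_rpow hx0.le (by linarith)]
        ring
      have hxK : (∫ u in (0:ℝ)..x, u ^ (-β) * (x - u) ^ (α - 1))
          = x * ((x ^ (-β) * x ^ (α - 1)) * K) := by
        rw [← step3, step2, smul_eq_mul, ← mul_assoc, mul_inv_cancel₀ (ne_of_gt hx0), one_mul]
      have hexp2 : (1:ℝ) + (-β + (α - 1)) = γ := by rw [← hαβγ]; ring
      have hpow : x * (x ^ (-β) * x ^ (α - 1)) = x ^ γ := by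
        calc x * (x ^ (-β) * x ^ (α - 1))
            = x ^ (1:ℝ) * x ^ (-β + (α - 1)) := by
              rw [Real.rpow_one, Real.rpow_add hx0]
          _ = x ^ ((1:ℝ) + (-β + (α - 1))) := (Real.rpow_add hx0 _ _).symm
          _ = x ^ γ := by rw [hexp2]
      have h2 : x * ((x ^ (-β) * x ^ (α - 1)) * K) = x ^ γ * K := by
        rw [← hpow]; ring
      rw [RLint, step1, hxK, h2, hc]
      ring
    refine ⟨c / 2, by positivity, ?_⟩
    intro h hh
    obtain ⟨hh0, hh1⟩ := hh
    set q : ℝ := (1/2 : ℝ) ^ γ⁻¹ with hq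
    have hq0 : 0 < q := Real.rpow_pos_of_pos (by norm_num) _
    have hq1 : q < 1 := Real.rpow_lt_one (by norm_num) (by norm_num) (by positivity)
    set y : ℝ := h * q with hy
    have hy0 : 0 < y := by positivity
    have hyh : y < h := by
      calc y = h * q := rfl
      _ < h * 1 := by exact mul_lt_mul_of_pos_left hq1 hh0
      _ = h := mul_one h
    have hymem : y ∈ Set.Ioo (0:ℝ) 1 := ⟨hy0, lt_trans hyh hh1⟩
    have hhmem : h ∈ Set.Ioo (0:ℝ) 1 := ⟨hh0, hh1⟩
    have hyγ : y ^ γ = h ^ γ * (1/2) := by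
      rw [hy, Real.mul_rpow hh0.le hq0.le, hq, ← Real.rpow_mul (by norm_num),
        inv_mul_cancel₀ (ne_of_gt hγ0), Real.rpow_one]
    have hval : |RLint α f₀ h - RLint α f₀ y| = c / 2 * h ^ γ := by
      rw [key h hhmem, key y hymem, hyγ]
      have : c * h ^ γ - c * (h ^ γ * (1/2)) = c / 2 * h ^ γ := by ring
      rw [this, abs_of_nonneg]
      positivity
    -- bounded above
    have hbdd : BddAbove {v | ∃ x ∈ Set.Ioo (0:ℝ) 1, ∃ y ∈ Set.Ioo (0:ℝ) 1,
        |x - y| ≤ h ∧ v = |RLint α f₀ x - RLint α f₀ y|} := by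
      refine ⟨2 * c, ?_⟩
      rintro v ⟨a, ha, b, hb, -, rfl⟩
      have bound : ∀ z ∈ Set.Ioo (0:ℝ) 1, |RLint α f₀ z| ≤ c := by
        intro z hz
        rw [key z hz, abs_of_nonneg (mul_nonneg hcpos.le (Real.rpow_nonneg hz.1.le _))]
        calc c * z ^ γ ≤ c * 1 := by
              refine mul_le_mul_of_nonneg_left ?_ hcpos.le
              exact Real.rpow_le_one hz.1.le hz.2.le hγ0.le
        _ = c := mul_one c
      calc |RLint α f₀ a - RLint α f₀ b| ≤ |RLint α f₀ a| + |RLint α f₀ b| := abs_sub _ _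
      _ ≤ c + c := add_le_add (bound a ha) (bound b hb)
      _ = 2 * c := by ring
    have hmem : c / 2 * h ^ γ ∈ {v | ∃ x ∈ Set.Ioo (0:ℝ) 1, ∃ y ∈ Set.Ioo (0:ℝ) 1,
        |x - y| ≤ h ∧ v = |RLint α f₀ x - RLint α f₀ y|} := by
      refine ⟨h, hhmem, y, hymem, ?_, hval.symm⟩
      rw [abs_of_nonneg (by linarith)]
      linarith
    have := le_csSup hbdd hmem
    simpa [omegaOn, hγ] using this
end

section
/- (Proposition 3.B.) Let α ∈ (0,1), p > 1/α, γ ∈ ℝ, and K ∈ (0,∞). Suppose that for every f ∈ L_p(0,∞) and every h > 0 the inequality ω(I^α[f], h) ≤ K · h^γ · |f|_p holds, where the modulus of continuity is taken over (0,∞). Then necessarily γ = α − 1/p. -/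
open MeasureTheory Set

/-- The `L_p(0,∞)` norm `|f|_p = (∫_0^∞ |f(x)|^p dx)^(1/p)`. -/
noncomputable def LpNorm (p : ℝ) (f : ℝ → ℝ) : ℝ :=
  (∫ x in Set.Ioi (0:ℝ), |f x| ^ p) ^ (1 / p)

noncomputable def myf (h : ℝ) : ℝ → ℝ := (Set.Ico (0:ℝ) h).indicator 1

lemma ikey {α : ℝ} (hα0 : 0 < α) (x c d : ℝ) :
    ∫ t in c..d, (x - t) ^ (α - 1) = ((x - c) ^ α - (x - d) ^ α) / α := by
  rw [intervalIntegral.integral_comp_sub_left (fun u => u ^ (α - 1)) x,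
    integral_rpow (Or.inl (by linarith))]
  rw [sub_add_cancel]

lemma ae_ne_pt (h : ℝ) : ∀ᵐ t : ℝ, t ≠ h := by
  rw [MeasureTheory.ae_iff]; simp [measure_singleton]

lemma RL_small {α h x : ℝ} (hα0 : 0 < α) (hh : 0 < h) (hx : 0 < x) (hxh : x ≤ h) :
    RLint α (myf h) x = x ^ α / (α * Real.Gamma α) := by
  unfold RLint
  have hcong : ∫ t in (0:ℝ)..x, myf h t * (x - t) ^ (α - 1)
      = ∫ t in (0:ℝ)..x, (x - t) ^ (α - 1) := by
    apply intervalIntegral.integral_congr_ae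
    filter_upwards [ae_ne_pt h] with t ht hmem
    rw [Set.uIoc_of_le hx.le] at hmem
    have : t ∈ Set.Ico (0:ℝ) h := ⟨hmem.1.le, lt_of_le_of_ne (hmem.2.trans hxh) ht⟩
    simp [myf, Set.indicator_of_mem this]
  rw [hcong, ikey hα0]
  rw [sub_zero, sub_self, Real.zero_rpow (ne_of_gt hα0)]
  rw [sub_zero]
  ring

lemma RL_large {α h x : ℝ} (hα : α ∈ Set.Ioo (0:ℝ) 1) (hh : 0 < h) (hx : h < x) :
    RLint α (myf h) x = (x ^ α - (x - h) ^ α) / (α * Real.Gamma α) := by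
  have hα0 := hα.1
  have hcont : ContinuousOn (fun t : ℝ => (x - t) ^ (α - 1)) (Set.uIcc 0 h) := by
    apply ContinuousOn.rpow_const
    · exact (continuous_const.sub continuous_id).continuousOn
    · intro t ht
      rw [Set.uIcc_of_le hh.le] at ht
      exact Or.inl (by linarith [ht.2])
  have hae1 : ∀ᵐ t : ℝ, t ∈ Set.uIoc (0:ℝ) h →
      myf h t * (x - t) ^ (α - 1) = (x - t) ^ (α - 1) := by
    filter_upwards [ae_ne_pt h] with t ht hmem
    rw [Set.uIoc_of_le hh.le] at hmem
    have : t ∈ Set.Ico (0:ℝ) h := ⟨hmem.1.le, lt_of_le_of_ne hmem.2 ht⟩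
    simp [myf, Set.indicator_of_mem this]
  have heq2 : ∀ t ∈ Set.uIoc h x, myf h t * (x - t) ^ (α - 1) = 0 := by
    intro t ht
    rw [Set.uIoc_of_le hx.le] at ht
    have : t ∉ Set.Ico (0:ℝ) h := fun hc => absurd hc.2 (not_lt.mpr ht.1.le)
    simp [myf, Set.indicator_of_notMem this]
  have hbase : IntegrableOn (fun t : ℝ => (x - t) ^ (α - 1)) (Set.uIoc 0 h) := by
    have := hcont.intervalIntegrable (μ := volume)
    rwa [intervalIntegrable_iff] at this
  have he1 : (fun t => myf h t * (x - t) ^ (α - 1))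
      =ᵐ[volume.restrict (Set.uIoc (0:ℝ) h)] (fun t : ℝ => (x - t) ^ (α - 1)) :=
    (ae_restrict_iff' measurableSet_uIoc).mpr hae1
  have hI1 : IntervalIntegrable (fun t => myf h t * (x - t) ^ (α - 1)) volume 0 h := by
    rw [intervalIntegrable_iff]
    exact hbase.congr he1.symm
  have he2 : (fun t : ℝ => (0:ℝ))
      =ᵐ[volume.restrict (Set.uIoc h x)] (fun t => myf h t * (x - t) ^ (α - 1)) :=
    (ae_restrict_iff' measurableSet_uIoc).mpr (ae_of_all _ (fun t ht => (heq2 t ht).symm))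
  have hI2 : IntervalIntegrable (fun t => myf h t * (x - t) ^ (α - 1)) volume h x := by
    rw [intervalIntegrable_iff]
    exact (integrable_zero _ _ _).congr he2
  unfold RLint
  rw [← intervalIntegral.integral_add_adjacent_intervals hI1 hI2]
  have e2 : ∫ t in h..x, myf h t * (x - t) ^ (α - 1) = 0 := by
    rw [intervalIntegral.integral_congr_ae (ae_of_all _ heq2)]
    simp
  have e1 : ∫ t in (0:ℝ)..h, myf h t * (x - t) ^ (α - 1)
      = (x ^ α - (x - h) ^ α) / α := by
    rw [intervalIntegral.integral_congr_ae (Filter.Eventually.mono hae1 (fun t ht => ht)),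
      ikey hα0, sub_zero]
  rw [e1, e2, add_zero]
  ring

lemma real_rpow_subadd {α u v : ℝ} (hα : 0 ≤ α) (hα1 : α ≤ 1) (hu : 0 ≤ u) (hv : 0 ≤ v) :
    (u + v) ^ α ≤ u ^ α + v ^ α := by
  have := NNReal.rpow_add_le_add_rpow u.toNNReal v.toNNReal hα hα1
  rw [← NNReal.coe_le_coe] at this
  push_cast at this
  rwa [Real.coe_toNNReal u hu, Real.coe_toNNReal v hv] at this

lemma RL_bound {α h x : ℝ} (hα : α ∈ Set.Ioo (0:ℝ) 1) (hh : 0 < h) (hx : 0 < x) :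
    RLint α (myf h) x ∈ Set.Icc 0 (h ^ α / (α * Real.Gamma α)) := by
  have hG : 0 < Real.Gamma α := Real.Gamma_pos_of_pos hα.1
  have hden : 0 < α * Real.Gamma α := mul_pos hα.1 hG
  rcases le_or_gt x h with hxh | hxh
  · rw [RL_small hα.1 hh hx hxh]
    constructor
    · positivity
    · exact (div_le_div_iff_of_pos_right hden).mpr (Real.rpow_le_rpow hx.le hxh hα.1.le)
  · rw [RL_large hα hh hxh]
    constructor
    · apply div_nonneg ?_ hden.le
      have := Real.rpow_le_rpow (by linarith) (by linarith : x - h ≤ x) hα.1.le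
      linarith
    · apply (div_le_div_iff_of_pos_right hden).mpr
      have := real_rpow_subadd hα.1.le hα.2.le (by linarith : (0:ℝ) ≤ x - h) hh.le
      rw [sub_add_cancel] at this
      linarith

lemma myf_abs_rpow {p h : ℝ} (hp : 0 < p) :
    (fun x => |myf h x| ^ p) = (Set.Ico (0:ℝ) h).indicator 1 := by
  funext x
  by_cases hx : x ∈ Set.Ico (0:ℝ) h
  · simp [myf, Set.indicator_of_mem hx, Real.one_rpow]
  · simp [myf, Set.indicator_of_notMem hx, Real.zero_rpow hp.ne']

lemma myf_integrable {p h : ℝ} (hp : 0 < p) (hh : 0 < h) :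
    MeasureTheory.IntegrableOn (fun x => |myf h x| ^ p) (Set.Ioi 0) := by
  rw [myf_abs_rpow hp]
  apply MeasureTheory.Integrable.integrableOn
  rw [integrable_indicator_iff measurableSet_Ico]
  apply (integrableOn_const_iff (C := (1:ℝ))).mpr
  right
  exact measure_Ico_lt_top

lemma myf_int_val {p h : ℝ} (hp : 0 < p) (hh : 0 < h) :
    ∫ x in Set.Ioi (0:ℝ), |myf h x| ^ p = h := by
  rw [myf_abs_rpow hp, MeasureTheory.integral_indicator measurableSet_Ico]
  rw [Measure.restrict_restrict measurableSet_Ico]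
  have : Set.Ico (0:ℝ) h ∩ Set.Ioi 0 = Set.Ioo 0 h := by
    ext t; constructor
    · rintro ⟨⟨_, h2⟩, h3⟩; exact ⟨h3, h2⟩
    · rintro ⟨h1, h2⟩; exact ⟨⟨le_of_lt h1, h2⟩, h1⟩
  rw [this]
  simp [Real.volume_Ioo, ENNReal.toReal_ofReal hh.le, hh.le]

theorem exponent_is_alpha_sub_inv_p (α p γ K : ℝ) (hα : α ∈ Set.Ioo (0:ℝ) 1)
    (hp : 1 / α < p) (hK : 0 < K)
    (H : ∀ f : ℝ → ℝ, MeasureTheory.IntegrableOn (fun x => |f x| ^ p) (Set.Ioi 0) →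
      ∀ h > (0:ℝ), omegaOn (Set.Ioi 0) (RLint α f) h ≤ K * h ^ γ * LpNorm p f) :
    γ = α - 1 / p := by
  obtain ⟨hα0, hα1⟩ := hα
  have hG : 0 < Real.Gamma α := Real.Gamma_pos_of_pos hα0
  have hden : 0 < α * Real.Gamma α := mul_pos hα0 hG
  have hp1 : 1 < p := lt_trans (by rw [lt_div_iff₀ hα0, one_mul]; exact hα1) hp
  have hp0 : 0 < p := by linarith
  set c : ℝ := (1 - (1/2 : ℝ) ^ α) / (α * Real.Gamma α) with hc
  have hhalf : (1/2 : ℝ) ^ α < 1 :=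
    Real.rpow_lt_one (by norm_num) (by norm_num) hα0
  have hcpos : 0 < c := div_pos (by linarith) hden
  -- main inequality for each h > 0
  have key : ∀ h : ℝ, 0 < h → c * h ^ α ≤ K * h ^ γ * h ^ (1/p) := by
    intro h hh
    have hineq := H (myf h) (myf_integrable hp0 hh) h hh
    have hLp : LpNorm p (myf h) = h ^ (1/p) := by
      unfold LpNorm; rw [myf_int_val hp0 hh]
    rw [hLp] at hineq
    refine le_trans ?_ hineq
    -- lower bound the sSup
    set g := RLint α (myf h) with hg
    set M : ℝ := h ^ α / (α * Real.Gamma α) with hM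
    have hbdd : BddAbove {v | ∃ x ∈ Set.Ioi (0:ℝ), ∃ y ∈ Set.Ioi (0:ℝ),
        |x - y| ≤ h ∧ v = |g x - g y|} := by
      refine ⟨M, fun v hv => ?_⟩
      obtain ⟨x, hx, y, hy, -, hveq⟩ := hv
      have h1 := RL_bound ⟨hα0, hα1⟩ hh hx
      have h2 := RL_bound ⟨hα0, hα1⟩ hh hy
      rw [hveq, abs_sub_le_iff]
      constructor <;> [linarith [h1.2, h2.1]; linarith [h2.2, h1.1]]
    have hmem : |g h - g (h/2)| ∈ {v | ∃ x ∈ Set.Ioi (0:ℝ), ∃ y ∈ Set.Ioi (0:ℝ),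
        |x - y| ≤ h ∧ v = |g x - g y|} := by
      refine ⟨h, hh, h/2, by simpa using half_pos hh, ?_, rfl⟩
      rw [sub_half, abs_of_pos (half_pos hh)]
      linarith
    have hle : |g h - g (h/2)| ≤ omegaOn (Set.Ioi 0) g h :=
      le_csSup hbdd hmem
    refine le_trans ?_ hle
    have e1 : g h = h ^ α / (α * Real.Gamma α) := RL_small hα0 hh hh le_rfl
    have e2 : g (h/2) = (h/2) ^ α / (α * Real.Gamma α) :=
      RL_small hα0 hh (half_pos hh) (by linarith)
    have e3 : (h/2 : ℝ) ^ α = h ^ α * (1/2 : ℝ) ^ α := by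
      rw [div_eq_mul_inv, Real.mul_rpow hh.le (by norm_num), inv_eq_one_div]
    have hmono : (h/2 : ℝ) ^ α ≤ h ^ α :=
      Real.rpow_le_rpow (half_pos hh).le (by linarith) hα0.le
    rw [e1, e2, abs_of_nonneg (sub_nonneg.mpr ((div_le_div_iff_of_pos_right hden).mpr hmono))]
    apply le_of_eq
    rw [hc, e3]
    field_simp
  -- conclude
  by_contra hne
  have hepos : γ + 1/p - α ≠ 0 := fun hz => hne (by linarith)
  set e : ℝ := γ + 1/p - α with he
  have hq : 0 < c / (2 * K) := div_pos hcpos (by linarith)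
  set h0 : ℝ := (c / (2 * K)) ^ e⁻¹ with hh0
  have hh0pos : 0 < h0 := Real.rpow_pos_of_pos hq _
  have hpow : h0 ^ e = c / (2 * K) := Real.rpow_inv_rpow hq.le hepos
  have hk := key h0 hh0pos
  have hsplit : h0 ^ γ * h0 ^ (1/p) = h0 ^ e * h0 ^ α := by
    rw [← Real.rpow_add hh0pos, ← Real.rpow_add hh0pos, he]
    ring_nf
  have hfin : c * h0 ^ α ≤ K * (h0 ^ e * h0 ^ α) := by
    calc c * h0 ^ α ≤ K * h0 ^ γ * h0 ^ (1/p) := hk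
      _ = K * (h0 ^ γ * h0 ^ (1/p)) := by ring
      _ = K * (h0 ^ e * h0 ^ α) := by rw [hsplit]
  rw [hpow] at hfin
  have hxa : 0 < h0 ^ α := Real.rpow_pos_of_pos hh0pos _
  have : c ≤ K * (c / (2 * K)) :=
    le_of_mul_le_mul_right (by calc c * h0 ^ α ≤ K * (c / (2 * K) * h0 ^ α) := hfin
      _ = K * (c / (2 * K)) * h0 ^ α := by ring) hxa
  have : c ≤ c / 2 := by
    rw [mul_div_assoc'] at this
    calc c ≤ K * c / (2 * K) := this
      _ = c / 2 := by field_simp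
  linarith
end

section
/- (Inequality (3.3).) Let α ∈ (0,1), p > 1/α, and f ∈ L_p(0,∞). Then for every x ∈ (0,1], Γ(α) · |I^α[f](x)| ≤ Z(α,p) · x^{α − 1/p} · Δ_p(f, x), where Z(α,p) = ((p−1)/(αp−1))^{1 − 1/p}. -/
open MeasureTheory Set

/-- Extension of `f` by zero to the nonpositive half-line. -/
noncomputable def zeroExt (f : ℝ → ℝ) : ℝ → ℝ := fun t => if 0 < t then f t else 0

/-- `Δ_p(f,h) = sup_{|δ| ≤ h} sup_x (∫_x^{x+δ} |f(t)|^p dt)^(1/p)`,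
where `f` is extended by zero to negative arguments. -/
noncomputable def Delta (p : ℝ) (f : ℝ → ℝ) (h : ℝ) : ℝ :=
  sSup {v | ∃ δ x : ℝ, |δ| ≤ h ∧
    v = (∫ t in Set.uIoc x (x + δ), |zeroExt f t| ^ p) ^ (1 / p)}

/-- The constant `Z(α,p) = ((p-1)/(αp-1))^(1-1/p)`. -/
noncomputable def Zconst (α p : ℝ) : ℝ := ((p - 1) / (α * p - 1)) ^ (1 - 1 / p)

theorem pointwise_bound_with_Delta (α p : ℝ) (hα : α ∈ Set.Ioo (0:ℝ) 1)
    (hp : 1 / α < p) (f : ℝ → ℝ)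
    (hf : MeasureTheory.IntegrableOn (fun x => |f x| ^ p) (Set.Ioi 0)) :
    ∀ x ∈ Set.Ioc (0:ℝ) 1,
      Real.Gamma α * |RLint α f x| ≤ Zconst α p * x ^ (α - 1 / p) * Delta p f x := by
  obtain ⟨hα0, hα1⟩ := hα
  intro x hx
  obtain ⟨hx0, _hx1⟩ := hx
  have hp1 : 1 < p := lt_trans (one_lt_one_div hα0 hα1) hp
  have hp0 : 0 < p := lt_trans one_pos hp1
  have hαp : 1 < α * p := by
    rw [div_lt_iff₀ hα0] at hp; nlinarith
  set q : ℝ := p / (p - 1) with hq_def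
  have hpq : p.HolderConjugate q := Real.HolderConjugate.conjExponent hp1
  have hq0 : 0 < q := hpq.symm.pos
  set r : ℝ := (α - 1) * q with hr_def
  have hps : p - 1 ≠ 0 := sub_ne_zero.mpr hp1.ne'
  have hkey : r + 1 = (α * p - 1) / (p - 1) := by
    rw [hr_def, hq_def]
    field_simp
    ring
  have hr1 : 0 < r + 1 := by
    rw [hkey]; exact div_pos (by linarith) (by linarith)
  have hr : -1 < r := by linarith
  set g : ℝ → ℝ := fun t => (x - t) ^ (α - 1) with hg_def
  have hΓ : 0 < Real.Gamma α := Real.Gamma_pos_of_pos hα0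
  -- Step 1 : rewrite the left-hand side
  have e1 : Real.Gamma α * |RLint α f x| = |∫ t in Ioc (0:ℝ) x, f t * g t| := by
    rw [RLint, abs_mul, abs_of_pos (by positivity : (0:ℝ) < 1 / Real.Gamma α),
      intervalIntegral.integral_of_le hx0.le]
    field_simp
    rfl
  -- nonnegativity of g on Ioc 0 x
  have hg_nonneg : ∀ t ∈ Ioc (0:ℝ) x, 0 ≤ g t := fun t ht =>
    Real.rpow_nonneg (by linarith [ht.2]) _
  -- Step 2 : |∫ fg| ≤ ∫ |f| g
  have e2 : |∫ t in Ioc (0:ℝ) x, f t * g t| ≤ ∫ t in Ioc (0:ℝ) x, |f t| * g t := by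
    calc |∫ t in Ioc (0:ℝ) x, f t * g t| ≤ ∫ t in Ioc (0:ℝ) x, ‖f t * g t‖ := by
          rw [← Real.norm_eq_abs]; exact norm_integral_le_integral_norm _
      _ = ∫ t in Ioc (0:ℝ) x, |f t| * g t := by
          refine setIntegral_congr_fun measurableSet_Ioc fun t ht => ?_
          rw [norm_mul, Real.norm_eq_abs, Real.norm_eq_abs,
            abs_of_nonneg (hg_nonneg t ht)]
  -- Integrability data
  have hfp_int : IntegrableOn (fun t => |f t| ^ p) (Ioc 0 x) :=
    hf.mono_set Ioc_subset_Ioi_self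
  have hF_meas : AEMeasurable (fun t => |f t|) (volume.restrict (Ioc 0 x)) := by
    have h1 : AEMeasurable (fun t => |f t| ^ p) (volume.restrict (Ioc 0 x)) :=
      hfp_int.aestronglyMeasurable.aemeasurable
    have h2 : AEMeasurable (fun t => (|f t| ^ p) ^ p⁻¹) (volume.restrict (Ioc 0 x)) :=
      ((Real.continuous_rpow_const (by positivity)).measurable).comp_aemeasurable h1
    refine h2.congr (Filter.Eventually.of_forall fun t => ?_)
    exact Real.rpow_rpow_inv (abs_nonneg _) hp0.ne'
  have hF_mem : MemLp (fun t => |f t|) (ENNReal.ofReal p) (volume.restrict (Ioc 0 x)) := by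
    have hiff := memLp_norm_rpow_iff (p := ENNReal.ofReal p) (q := ENNReal.ofReal p)
      hF_meas.aestronglyMeasurable
      (by simp [ENNReal.ofReal_eq_zero, not_le, hp0])
      (by simp)
    rw [ENNReal.div_self (by simp [ENNReal.ofReal_eq_zero, not_le, hp0]) (by simp)] at hiff
    refine hiff.mp (memLp_one_iff_integrable.mpr ?_)
    refine hfp_int.congr_fun (fun t _ => ?_) measurableSet_Ioc
    rw [Real.norm_eq_abs, abs_abs, ENNReal.toReal_ofReal hp0.le]
  have hg_meas : Measurable g := by fun_prop
  have hgr_int : IntegrableOn (fun t => (x - t) ^ r) (Ioc 0 x) := by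
    have h1 : IntervalIntegrable (fun u : ℝ => u ^ r) volume 0 x :=
      intervalIntegral.intervalIntegrable_rpow' hr
    have h2 := h1.comp_sub_left x
    simp only [sub_zero, sub_self] at h2
    exact (intervalIntegrable_iff_integrableOn_Ioc_of_le hx0.le).mp h2.symm
  have hgq_eqOn : ∀ t ∈ Ioc (0:ℝ) x, g t ^ q = (x - t) ^ r := fun t ht => by
    rw [hg_def, hr_def, Real.rpow_mul (by linarith [ht.2] : (0:ℝ) ≤ x - t)]
  have hG_mem : MemLp g (ENNReal.ofReal q) (volume.restrict (Ioc 0 x)) := by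
    have hiff := memLp_norm_rpow_iff (p := ENNReal.ofReal q) (q := ENNReal.ofReal q)
      (μ := volume.restrict (Ioc 0 x)) (hg_meas.aestronglyMeasurable)
      (by simp [ENNReal.ofReal_eq_zero, not_le, hq0])
      (by simp)
    rw [ENNReal.div_self (by simp [ENNReal.ofReal_eq_zero, not_le, hq0]) (by simp)] at hiff
    refine hiff.mp (memLp_one_iff_integrable.mpr ?_)
    refine hgr_int.congr_fun (fun t ht => ?_) measurableSet_Ioc
    rw [Real.norm_eq_abs, abs_of_nonneg (hg_nonneg t ht), ENNReal.toReal_ofReal hq0.le,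
      hgq_eqOn t ht]
  -- Step 3 : Hölder
  have holder : ∫ t in Ioc (0:ℝ) x, |f t| * g t ≤
      (∫ t in Ioc (0:ℝ) x, |f t| ^ p) ^ (1 / p) * (∫ t in Ioc (0:ℝ) x, g t ^ q) ^ (1 / q) := by
    refine integral_mul_le_Lp_mul_Lq_of_nonneg hpq ?_ ?_ hF_mem hG_mem
    · exact Filter.Eventually.of_forall fun t => abs_nonneg _
    · filter_upwards [ae_restrict_mem measurableSet_Ioc] with t ht
      exact hg_nonneg t ht
  -- Step 4 : compute the g-factor
  have hgq_val : ∫ t in Ioc (0:ℝ) x, g t ^ q = x ^ (r + 1) / (r + 1) := by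
    rw [← intervalIntegral.integral_of_le hx0.le]
    rw [intervalIntegral.integral_congr (g := fun t => (x - t) ^ r) ?_]
    · rw [show (∫ t in (0:ℝ)..x, (x - t) ^ r) = ∫ u in (x - x)..(x - 0), u ^ r from
        intervalIntegral.integral_comp_sub_left (fun u : ℝ => u ^ r) x]
      rw [sub_self, sub_zero, integral_rpow (Or.inl hr),
        Real.zero_rpow (by linarith : r + 1 ≠ 0), sub_zero]
    · intro t ht
      rw [uIcc_of_le hx0.le] at ht
      show ((x - t) ^ (α - 1)) ^ q = (x - t) ^ ((α - 1) * q)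
      rw [Real.rpow_mul (by linarith [ht.2] : (0:ℝ) ≤ x - t)]
  have hB_val : (x ^ (r + 1) / (r + 1)) ^ (1 / q) = Zconst α p * x ^ (α - 1 / p) := by
    have h2 : (1:ℝ) / q = 1 - 1 / p := by
      rw [hq_def]; field_simp
    have h3 : (r + 1) * (1 / q) = α - 1 / p := by
      rw [hkey, hq_def]
      field_simp
    rw [div_eq_mul_inv, Real.mul_rpow (Real.rpow_nonneg hx0.le _) (by positivity),
      ← Real.rpow_mul hx0.le, h3]
    have h4 : ((r + 1)⁻¹ : ℝ) ^ (1 / q) = Zconst α p := by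
      rw [hkey, Zconst, ← h2]
      rw [show ((α * p - 1) / (p - 1))⁻¹ = (p - 1) / (α * p - 1) by rw [inv_div]]
    rw [h4]; ring
  -- Step 5 : the Lp factor is at most Delta
  set G : ℝ → ℝ := fun t => |zeroExt f t| ^ p with hG_def
  have hG_nonneg : ∀ t, 0 ≤ G t := fun t => Real.rpow_nonneg (abs_nonneg _) _
  have hG_int : Integrable G := by
    rw [← integrableOn_univ, ← Set.Iic_union_Ioi (a := (0:ℝ))]
    refine IntegrableOn.union ?_ ?_
    · refine (integrableOn_zero (s := Iic (0:ℝ))).congr_fun (fun t ht => ?_) measurableSet_Iic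
      simp only [hG_def, zeroExt, if_neg (not_lt.mpr (mem_Iic.mp ht)), abs_zero,
        Real.zero_rpow hp0.ne', Pi.zero_apply]
    · refine hf.congr_fun (fun t ht => ?_) measurableSet_Ioi
      simp only [hG_def, zeroExt, if_pos (mem_Ioi.mp ht)]
  set S : Set ℝ := {v | ∃ δ y : ℝ, |δ| ≤ x ∧
    v = (∫ t in Set.uIoc y (y + δ), |zeroExt f t| ^ p) ^ (1 / p)} with hS_def
  have hS_bdd : BddAbove S := by
    refine ⟨(∫ t, G t) ^ (1 / p), ?_⟩
    rintro v ⟨δ, y, hδ, rfl⟩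
    refine Real.rpow_le_rpow ?_ ?_ (by positivity)
    · exact setIntegral_nonneg measurableSet_uIoc fun t _ => hG_nonneg t
    · exact setIntegral_le_integral hG_int (Filter.Eventually.of_forall hG_nonneg)
  have hA_le : (∫ t in Ioc (0:ℝ) x, |f t| ^ p) ^ (1 / p) ≤ Delta p f x := by
    have hmem : (∫ t in Set.uIoc (0:ℝ) (0 + x), |zeroExt f t| ^ p) ^ (1 / p) ∈ S :=
      ⟨x, 0, by rw [abs_of_pos hx0], rfl⟩
    have heq : (∫ t in Set.uIoc (0:ℝ) (0 + x), |zeroExt f t| ^ p) ^ (1 / p)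
        = (∫ t in Ioc (0:ℝ) x, |f t| ^ p) ^ (1 / p) := by
      rw [zero_add, uIoc_of_le hx0.le]
      congr 1
      refine setIntegral_congr_fun measurableSet_Ioc fun t ht => ?_
      simp [zeroExt, if_pos ht.1]
    rw [Delta, ← hS_def]
    rw [← heq]
    exact le_csSup hS_bdd hmem
  -- Final assembly
  have hZx_nonneg : 0 ≤ Zconst α p * x ^ (α - 1 / p) := by
    have : (0:ℝ) ≤ Zconst α p :=
      Real.rpow_nonneg (div_nonneg (by linarith) (by linarith)) _
    positivity
  calc Real.Gamma α * |RLint α f x|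
      = |∫ t in Ioc (0:ℝ) x, f t * g t| := e1
    _ ≤ ∫ t in Ioc (0:ℝ) x, |f t| * g t := e2
    _ ≤ (∫ t in Ioc (0:ℝ) x, |f t| ^ p) ^ (1 / p) *
        (∫ t in Ioc (0:ℝ) x, g t ^ q) ^ (1 / q) := holder
    _ = (∫ t in Ioc (0:ℝ) x, |f t| ^ p) ^ (1 / p) * (Zconst α p * x ^ (α - 1 / p)) := by
        rw [hgq_val, hB_val]
    _ ≤ Delta p f x * (Zconst α p * x ^ (α - 1 / p)) :=
        mul_le_mul_of_nonneg_right hA_le hZx_nonneg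
    _ = Zconst α p * x ^ (α - 1 / p) * Delta p f x := by ring
end

section
/- (Proposition 4.C.) Let d ≥ 1, 0 < α < d, p > d/α, ν ∈ ℝ, and K ∈ (0,∞). Suppose that for every measurable f : ℝ^d → ℝ with |f|_{α,d,p} < ∞ and every h ≥ 0 the inequality ω(R_α[f], h) ≤ K · h^ν · |f|_{α,d,p} holds. Then necessarily ν = α − d/p. -/
open MeasureTheory Set

/-- The Riesz potential `R_α[f](x) = ∫_{ℝ^d} f(y) ‖x-y‖^(α-d) dy`. -/
noncomputable def RieszPot (d : ℕ) (α : ℝ) (f : EuclideanSpace ℝ (Fin d) → ℝ)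
    (x : EuclideanSpace ℝ (Fin d)) : ℝ :=
  ∫ y, f y * ‖x - y‖ ^ (α - d)

/-- Modulus of continuity of `g : ℝ^d → ℝ`:
`ω(g,h) = sup {|g x - g y| : ‖x - y‖ ≤ h}`. -/
noncomputable def omegaE (d : ℕ) (g : EuclideanSpace ℝ (Fin d) → ℝ) (h : ℝ) : ℝ :=
  sSup {v | ∃ x y : EuclideanSpace ℝ (Fin d), ‖x - y‖ ≤ h ∧ v = |g x - g y|}

/-- The `L_p(ℝ^d)` norm. -/
noncomputable def LpNormE (d : ℕ) (p : ℝ) (f : EuclideanSpace ℝ (Fin d) → ℝ) : ℝ :=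
  (∫ y, |f y| ^ p) ^ (1 / p)

/-- The norm `|f|_{α,d,p} = max( ∫ (1+‖y‖)^(α-d) |f(y)| dy , |f|_p )`. -/
noncomputable def mixedNorm (d : ℕ) (α p : ℝ) (f : EuclideanSpace ℝ (Fin d) → ℝ) : ℝ :=
  max (∫ y, (1 + ‖y‖) ^ (α - d) * |f y|) (LpNormE d p f)

section AuxRieszLemmas

open Metric Module Filter
open scoped ENNReal

variable {d : ℕ}


lemma integrableOn_norm_rpow_ball (hd : 1 ≤ d) {s : ℝ} (hs : -(d:ℝ) < s) (hs0 : s < 0) (r : ℝ) :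
    IntegrableOn (fun w : EuclideanSpace ℝ (Fin d) => ‖w‖ ^ s) (ball 0 r) := by
  have : Nontrivial (EuclideanSpace ℝ (Fin d)) := by
    refine ⟨EuclideanSpace.single ⟨0, hd⟩ 1, 0, fun h => ?_⟩
    have := congrArg norm h
    simp [EuclideanSpace.norm_single] at this
  constructor
  · exact ((measurable_norm.pow_const s).aestronglyMeasurable).restrict
  · rw [HasFiniteIntegral]
    have hnn : ∀ w : EuclideanSpace ℝ (Fin d), 0 ≤ ‖w‖ ^ s := fun w => Real.rpow_nonneg (norm_nonneg w) s
    have heq : (∫⁻ w in ball (0 : EuclideanSpace ℝ (Fin d)) r, ‖(‖w‖ ^ s)‖ₑ ∂volume)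
        = ∫⁻ w in ball (0 : EuclideanSpace ℝ (Fin d)) r, ENNReal.ofReal (‖w‖ ^ s) ∂volume :=
      lintegral_enorm_of_nonneg fun w => hnn w
    rw [heq]
    rw [lintegral_eq_lintegral_meas_le _ (Eventually.of_forall fun w => hnn w)
      ((measurable_norm.pow_const s).aemeasurable)]
    have hdim : finrank ℝ (EuclideanSpace ℝ (Fin d)) = d := finrank_euclideanSpace_fin
    set F : ℝ → ℝ≥0∞ :=
      fun t => (volume.restrict (ball (0 : EuclideanSpace ℝ (Fin d)) r))
        {a | t ≤ ‖a‖ ^ s} with hF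
    have claim1 : ∀ t : ℝ, F t ≤ volume (ball (0 : EuclideanSpace ℝ (Fin d)) r) := by
      intro t
      calc F t ≤ (volume.restrict (ball (0 : EuclideanSpace ℝ (Fin d)) r)) univ :=
            measure_mono (subset_univ _)
        _ = volume (ball (0 : EuclideanSpace ℝ (Fin d)) r) := by
            rw [Measure.restrict_apply_univ]
    have claim2 : ∀ t : ℝ, 0 < t →
        F t ≤ ENNReal.ofReal (t ^ (s⁻¹ * d)) * volume (ball (0 : EuclideanSpace ℝ (Fin d)) 1) := by
      intro t ht
      have hsub : {a : EuclideanSpace ℝ (Fin d) | t ≤ ‖a‖ ^ s} ⊆ closedBall 0 (t ^ s⁻¹) := by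
        intro a ha
        simp only [mem_setOf_eq] at ha
        rcases eq_or_ne a 0 with rfl | ha0
        · simp only [norm_zero, Real.zero_rpow hs0.ne] at ha
          exact absurd (lt_of_lt_of_le ht ha) (lt_irrefl 0)
        · have hna : 0 < ‖a‖ := norm_pos_iff.mpr ha0
          have h1 : (‖a‖ ^ s) ^ s⁻¹ ≤ t ^ s⁻¹ :=
            Real.rpow_le_rpow_of_nonpos ht ha (inv_nonpos.mpr hs0.le)
          rw [← Real.rpow_mul (norm_nonneg a), mul_inv_cancel₀ hs0.ne, Real.rpow_one] at h1
          exact mem_closedBall_zero_iff.mpr h1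
      calc F t ≤ volume (closedBall (0 : EuclideanSpace ℝ (Fin d)) (t ^ s⁻¹)) :=
            le_trans (Measure.restrict_apply_le _ _) (measure_mono hsub)
        _ = ENNReal.ofReal ((t ^ s⁻¹) ^ finrank ℝ (EuclideanSpace ℝ (Fin d)))
              * volume (ball (0 : EuclideanSpace ℝ (Fin d)) 1) :=
            Measure.addHaar_closedBall _ _ (Real.rpow_nonneg ht.le _)
        _ = ENNReal.ofReal (t ^ (s⁻¹ * d)) * volume (ball (0 : EuclideanSpace ℝ (Fin d)) 1) := by
            rw [hdim, ← Real.rpow_natCast (t ^ s⁻¹) d, ← Real.rpow_mul ht.le]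
    have he : s⁻¹ * d < -1 := by
      rw [mul_comm, ← div_eq_mul_inv]
      rw [div_lt_iff_of_neg hs0]
      linarith
    calc (∫⁻ t in Ioi (0:ℝ), F t)
        ≤ ∫⁻ t in Ioc (0:ℝ) 1 ∪ Ioi 1, F t := lintegral_mono_set Ioi_subset_Ioc_union_Ioi
      _ ≤ (∫⁻ t in Ioc (0:ℝ) 1, F t) + ∫⁻ t in Ioi (1:ℝ), F t := lintegral_union_le _ _ _
      _ < ⊤ := by
          refine ENNReal.add_lt_top.2 ⟨?_, ?_⟩
          · calc (∫⁻ t in Ioc (0:ℝ) 1, F t)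
                ≤ ∫⁻ _ in Ioc (0:ℝ) 1, volume (ball (0 : EuclideanSpace ℝ (Fin d)) r) :=
                  lintegral_mono fun t => claim1 t
              _ = volume (ball (0 : EuclideanSpace ℝ (Fin d)) r) * volume (Ioc (0:ℝ) 1) :=
                  setLIntegral_const _ _
              _ < ⊤ := by
                  refine ENNReal.mul_lt_top measure_ball_lt_top ?_
                  simp [Real.volume_Ioc]
          · calc (∫⁻ t in Ioi (1:ℝ), F t)
                ≤ ∫⁻ t in Ioi (1:ℝ),
                    ENNReal.ofReal (t ^ (s⁻¹ * d)) * volume (ball (0 : EuclideanSpace ℝ (Fin d)) 1) := by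
                  refine setLIntegral_mono' measurableSet_Ioi fun t ht => ?_
                  exact claim2 t (lt_trans zero_lt_one ht)
              _ = (∫⁻ t in Ioi (1:ℝ), ENNReal.ofReal (t ^ (s⁻¹ * d)))
                    * volume (ball (0 : EuclideanSpace ℝ (Fin d)) 1) :=
                  lintegral_mul_const' _ _ measure_ball_lt_top.ne
              _ < ⊤ := by
                  refine ENNReal.mul_lt_top ?_ measure_ball_lt_top
                  exact (integrableOn_Ioi_rpow_of_lt he zero_lt_one).setLIntegral_lt_top

lemma integrableOn_kernel_ball (hd : 1 ≤ d) {s : ℝ} (hs : -(d:ℝ) < s) (hs0 : s < 0)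
    (b : EuclideanSpace ℝ (Fin d)) (ε : ℝ) :
    IntegrableOn (fun w : EuclideanSpace ℝ (Fin d) => ‖w‖ ^ s) (ball b ε) := by
  refine (integrableOn_norm_rpow_ball hd hs hs0 (‖b‖ + ε)).mono_set ?_
  intro w hw
  rw [mem_ball_zero_iff]
  calc ‖w‖ ≤ ‖w - b‖ + ‖b‖ := by simpa using norm_add_le (w - b) b
    _ < ε + ‖b‖ := by have := mem_ball_iff_norm.mp hw; linarith
    _ = ‖b‖ + ε := by ring

lemma kernel_translate {s : ℝ} (x c : EuclideanSpace ℝ (Fin d)) (ε : ℝ) :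
    (∫ y in ball c ε, ‖x - y‖ ^ s) = ∫ w in ball (c - x) ε, ‖w‖ ^ s := by
  have h1 : (∫ y in ball c ε, ‖x - y‖ ^ s)
      = ∫ y, (ball c ε).indicator (fun y => ‖x - y‖ ^ s) y :=
    (integral_indicator measurableSet_ball).symm
  have h2 : (∫ w in ball (c - x) ε, (‖·‖ ^ s) w)
      = ∫ w, (ball (c - x) ε).indicator (‖·‖ ^ s) w :=
    (integral_indicator measurableSet_ball).symm
  rw [h1, h2]
  have h3 : (fun y => (ball c ε).indicator (fun y => ‖x - y‖ ^ s) y)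
      = fun y => (ball (c - x) ε).indicator (‖·‖ ^ s) (y - x) := by
    funext y
    have hmem : y - x ∈ ball (c - x) ε ↔ y ∈ ball c ε := by
      simp only [mem_ball, dist_eq_norm]
      constructor <;> intro h <;> [skip; skip] <;>
        · convert h using 2
          abel
    by_cases hy : y ∈ ball c ε
    · rw [indicator_of_mem hy, indicator_of_mem (hmem.mpr hy)]
      simp only [norm_sub_rev x y]
    · rw [indicator_of_notMem hy, indicator_of_notMem (fun h => hy (hmem.mp h))]
  rw [h3]
  exact integral_sub_right_eq_self ((ball (c - x) ε).indicator (‖·‖ ^ s)) x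

lemma kernel_ball_upper (hd : 1 ≤ d) {s : ℝ} (hs : -(d:ℝ) < s) (hs0 : s < 0)
    (b : EuclideanSpace ℝ (Fin d)) {ε : ℝ} (hε : 0 < ε) :
    (∫ w in ball b ε, ‖w‖ ^ s)
      ≤ (∫ w in ball (0 : EuclideanSpace ℝ (Fin d)) ε, ‖w‖ ^ s)
        + ε ^ s * (volume (ball b ε)).toReal := by
  have hInt : IntegrableOn (fun w : EuclideanSpace ℝ (Fin d) => ‖w‖ ^ s) (ball b ε) :=
    integrableOn_kernel_ball hd hs hs0 b ε
  have hsplit := integral_inter_add_diff (μ := volume) (s := ball b ε)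
    (t := ball (0 : EuclideanSpace ℝ (Fin d)) ε)
    (f := fun w : EuclideanSpace ℝ (Fin d) => ‖w‖ ^ s) measurableSet_ball hInt
  rw [← hsplit]
  have h1 : (∫ w in ball b ε ∩ ball (0 : EuclideanSpace ℝ (Fin d)) ε, ‖w‖ ^ s)
      ≤ ∫ w in ball (0 : EuclideanSpace ℝ (Fin d)) ε, ‖w‖ ^ s := by
    refine setIntegral_mono_set (integrableOn_norm_rpow_ball hd hs hs0 ε) ?_ ?_
    · exact Eventually.of_forall fun w => Real.rpow_nonneg (norm_nonneg w) s
    · exact HasSubset.Subset.eventuallyLE inter_subset_right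
  have h2 : (∫ w in ball b ε \ ball (0 : EuclideanSpace ℝ (Fin d)) ε, ‖w‖ ^ s)
      ≤ ε ^ s * (volume (ball b ε)).toReal := by
    have hb : ∀ w ∈ ball b ε \ ball (0 : EuclideanSpace ℝ (Fin d)) ε, ‖w‖ ^ s ≤ ε ^ s := by
      intro w hw
      have : ¬ (‖w‖ < ε) := fun h => hw.2 (mem_ball_zero_iff.mpr h)
      exact Real.rpow_le_rpow_of_nonpos hε (not_lt.mp this) hs0.le
    calc (∫ w in ball b ε \ ball (0 : EuclideanSpace ℝ (Fin d)) ε, ‖w‖ ^ s)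
        ≤ ∫ _ in ball b ε \ ball (0 : EuclideanSpace ℝ (Fin d)) ε, ε ^ s := by
          refine setIntegral_mono_on (hInt.mono_set diff_subset) ?_
            (measurableSet_ball.diff measurableSet_ball) hb
          exact Iff.mpr integrableOn_const_iff (Or.inr (lt_of_le_of_lt
            (measure_mono diff_subset) measure_ball_lt_top))
      _ = (volume (ball b ε \ ball (0 : EuclideanSpace ℝ (Fin d)) ε)).toReal * ε ^ s := by
          rw [setIntegral_const]; rfl
      _ ≤ (volume (ball b ε)).toReal * ε ^ s := by
          refine mul_le_mul_of_nonneg_right ?_ (Real.rpow_nonneg hε.le s)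
          exact ENNReal.toReal_mono measure_ball_lt_top.ne (measure_mono diff_subset)
      _ = ε ^ s * (volume (ball b ε)).toReal := by ring
  linarith

end AuxRieszLemmas

open Metric Module Filter
open scoped ENNReal

set_option maxHeartbeats 1000000 in
theorem riesz_exponent_is_alpha_sub_d_div_p (d : ℕ) (hd : 1 ≤ d) (α p ν K : ℝ)
    (hα : 0 < α ∧ α < d) (hp : (d : ℝ) / α < p) (hK : 0 < K)
    (H : ∀ f : EuclideanSpace ℝ (Fin d) → ℝ,
      MeasureTheory.Integrable (fun y => (1 + ‖y‖) ^ (α - d) * |f y|) →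
      MeasureTheory.Integrable (fun y => |f y| ^ p) →
      ∀ h ≥ (0:ℝ), omegaE d (RieszPot d α f) h ≤ K * h ^ ν * mixedNorm d α p f) :
    ν = α - (d : ℝ) / p := by
  obtain ⟨hα0, hαd⟩ := hα
  haveI : Nontrivial (EuclideanSpace ℝ (Fin d)) := by
    refine ⟨EuclideanSpace.single ⟨0, hd⟩ 1, 0, fun h => ?_⟩
    have := congrArg norm h
    simp [EuclideanSpace.norm_single] at this
  have hd0 : (0:ℝ) < d := by exact_mod_cast hd
  have hda1 : 1 < (d:ℝ)/α := (one_lt_div hα0).mpr hαd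
  have hp1 : 1 < p := lt_trans hda1 hp
  have hp0 : 0 < p := lt_trans one_pos hp1
  set q : ℝ := (d:ℝ)/p with hqdef
  have hq0 : 0 < q := div_pos hd0 hp0
  have hs_neg : α - (d:ℝ) < 0 := sub_neg.mpr hαd
  have hs_gt : -(d:ℝ) < α - (d:ℝ) := by linarith
  set vd := (volume (ball (0:EuclideanSpace ℝ (Fin d)) 1)).toReal with hvddef
  have hvd : 0 < vd :=
    ENNReal.toReal_pos (measure_ball_pos _ _ one_pos).ne' measure_ball_lt_top.ne
  have hballvol : ∀ (x : EuclideanSpace ℝ (Fin d)) {r : ℝ}, 0 ≤ r →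
      (volume (ball x r)).toReal = r ^ d * vd := by
    intro x r hr
    rw [Measure.addHaar_ball (volume) x hr, ENNReal.toReal_mul,
      ENNReal.toReal_ofReal (pow_nonneg hr _), finrank_euclideanSpace_fin]
  set c₀ : ℝ := (2:ℝ)^(-(d:ℝ)) * ((2:ℝ)^(α-(d:ℝ)) - (3:ℝ)^(α-(d:ℝ))) with hc₀def
  have hc₀ : 0 < c₀ := by
    refine mul_pos (Real.rpow_pos_of_pos two_pos _) (sub_pos.mpr ?_)
    exact Real.rpow_lt_rpow_of_neg two_pos (by norm_num) hs_neg
  set Cm : ℝ := max vd (vd ^ (1/p)) with hCmdef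
  have hCm : 0 < Cm := lt_of_lt_of_le hvd (le_max_left _ _)
  have main : ∀ ε : ℝ, 0 < ε → vd * c₀ * ε ^ α ≤ K * (2*ε) ^ ν * (Cm * ε ^ q) := by
    intro ε hε
    -- the far-away shift S
    set S : ℝ := max 1 (ε ^ ((q - d)/(α - (d:ℝ)))) with hSdef
    have hS1 : (1:ℝ) ≤ S := le_max_left _ _
    have hS0 : (0:ℝ) < S := lt_of_lt_of_le one_pos hS1
    have hSs : S ^ (α-(d:ℝ)) ≤ ε ^ (q - (d:ℝ)) := by
      have h1 : ε ^ ((q-(d:ℝ))/(α - (d:ℝ))) ≤ S := le_max_right _ _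
      have h2 : (0:ℝ) < ε ^ ((q-(d:ℝ))/(α-(d:ℝ))) := Real.rpow_pos_of_pos hε _
      calc S ^ (α-(d:ℝ)) ≤ (ε ^ ((q-(d:ℝ))/(α-(d:ℝ)))) ^ (α-(d:ℝ)) :=
            Real.rpow_le_rpow_of_nonpos h2 h1 hs_neg.le
        _ = ε ^ (q-(d:ℝ)) := by
            rw [← Real.rpow_mul hε.le, div_mul_cancel₀ _ hs_neg.ne]
    set e₁ : EuclideanSpace ℝ (Fin d) := EuclideanSpace.single ⟨0, hd⟩ 1 with he₁def
    have he₁ : ‖e₁‖ = 1 := by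
      rw [he₁def, EuclideanSpace.norm_single]; norm_num
    have hnsmul : ∀ a b : ℝ,
        ‖(a • e₁ : EuclideanSpace ℝ (Fin d)) - b • e₁‖ = |a - b| := by
      intro a b
      rw [← sub_smul, norm_smul, he₁, mul_one, Real.norm_eq_abs]
    set c : EuclideanSpace ℝ (Fin d) := (S + ε) • e₁ with hcdef
    set x₀ : EuclideanSpace ℝ (Fin d) := (S + 3*ε) • e₁ with hx₀def
    set y₀ : EuclideanSpace ℝ (Fin d) := (S + 5*ε) • e₁ with hy₀def
    have hxc : ‖x₀ - c‖ = 2*ε := by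
      rw [hx₀def, hcdef, hnsmul]
      rw [abs_of_pos (by linarith)]; ring
    have hyc : ‖y₀ - c‖ = 4*ε := by
      rw [hy₀def, hcdef, hnsmul]
      rw [abs_of_pos (by linarith)]; ring
    have hxy : ‖x₀ - y₀‖ = 2*ε := by
      rw [hx₀def, hy₀def, hnsmul]
      rw [abs_of_neg (by linarith)]; ring
    set f : EuclideanSpace ℝ (Fin d) → ℝ := (ball c ε).indicator (fun _ => (1:ℝ)) with hfdef
    -- (a) formula for the potential
    have hRf : ∀ x, RieszPot d α f x = ∫ y in ball c ε, ‖x - y‖ ^ (α - (d:ℝ)) := by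
      intro x
      rw [RieszPot, ← integral_indicator measurableSet_ball]
      congr 1
      funext y
      by_cases hy : y ∈ ball c ε
      · rw [indicator_of_mem hy, hfdef, indicator_of_mem hy]; simp
      · rw [indicator_of_notMem hy, hfdef, indicator_of_notMem hy]; simp
    -- integrability of the kernel over the ball, for far-away points
    have hker_int : ∀ x : EuclideanSpace ℝ (Fin d), (∀ z ∈ ball c ε, ε ≤ ‖x - z‖) →
        IntegrableOn (fun y => ‖x - y‖ ^ (α-(d:ℝ))) (ball c ε) := by
      intro x hx
      refine Measure.integrableOn_of_bounded (M := ε^(α-(d:ℝ))) measure_ball_lt_top.ne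
        ((Measurable.aestronglyMeasurable (by fun_prop))) ?_
      filter_upwards [ae_restrict_mem measurableSet_ball] with z hz
      rw [Real.norm_of_nonneg (Real.rpow_nonneg (norm_nonneg _) _)]
      exact Real.rpow_le_rpow_of_nonpos hε (hx z hz) hs_neg.le
    have hx₀far : ∀ z ∈ ball c ε, ε ≤ ‖x₀ - z‖ := by
      intro z hz
      have h1 : ‖z - c‖ < ε := mem_ball_iff_norm.mp hz
      have h2 : ‖x₀ - c‖ ≤ ‖x₀ - z‖ + ‖z - c‖ := by
        simpa using norm_add_le (x₀ - z) (z - c)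
      rw [hxc] at h2; linarith
    have hy₀far : ∀ z ∈ ball c ε, 3*ε ≤ ‖y₀ - z‖ := by
      intro z hz
      have h1 : ‖z - c‖ < ε := mem_ball_iff_norm.mp hz
      have h2 : ‖y₀ - c‖ ≤ ‖y₀ - z‖ + ‖z - c‖ := by
        simpa using norm_add_le (y₀ - z) (z - c)
      rw [hyc] at h2; linarith
    -- the inner sub-ball
    set c' : EuclideanSpace ℝ (Fin d) := (S + (3/2)*ε) • e₁ with hc'def
    have htsub : ball c' (ε/2) ⊆ ball c ε := by
      intro z hz
      have h1 : ‖z - c'‖ < ε/2 := mem_ball_iff_norm.mp hz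
      have h2 : ‖c' - c‖ = ε/2 := by
        rw [hc'def, hcdef, hnsmul, abs_of_pos (by linarith)]; ring
      have h3 : ‖z - c‖ ≤ ‖z - c'‖ + ‖c' - c‖ := by
        simpa using norm_add_le (z - c') (c' - c)
      rw [mem_ball_iff_norm]
      rw [h2] at h3; linarith
    -- lower bound for the potential at x₀ on the sub-ball
    have hlow1 : (2*ε)^(α-(d:ℝ)) * ((ε/2)^d * vd)
        ≤ ∫ y in ball c' (ε/2), ‖x₀ - y‖ ^ (α-(d:ℝ)) := by
      have hle : ∀ z ∈ ball c' (ε/2), (2*ε)^(α-(d:ℝ)) ≤ ‖x₀ - z‖ ^ (α-(d:ℝ)) := by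
        intro z hz
        have h1 : ‖z - c'‖ < ε/2 := mem_ball_iff_norm.mp hz
        have h2 : ‖x₀ - c'‖ = (3/2)*ε := by
          rw [hx₀def, hc'def, hnsmul, abs_of_pos (by linarith)]; ring
        have h3 : ‖x₀ - z‖ ≤ ‖x₀ - c'‖ + ‖c' - z‖ := by
          simpa using norm_add_le (x₀ - c') (c' - z)
        rw [norm_sub_rev c' z] at h3
        have h4 : ‖x₀ - z‖ ≤ 2*ε := by rw [h2] at h3; linarith
        have h5 : (0:ℝ) < ‖x₀ - z‖ := lt_of_lt_of_le hε (hx₀far z (htsub hz))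
        exact Real.rpow_le_rpow_of_nonpos h5 h4 hs_neg.le
      calc (2*ε)^(α-(d:ℝ)) * ((ε/2)^d * vd)
          = ∫ _ in ball c' (ε/2), (2*ε)^(α-(d:ℝ)) := by
            rw [setIntegral_const, smul_eq_mul, measureReal_def, hballvol _ (by linarith : (0:ℝ) ≤ ε/2)]
            ring
        _ ≤ ∫ y in ball c' (ε/2), ‖x₀ - y‖ ^ (α-(d:ℝ)) := by
            refine setIntegral_mono_on (Iff.mpr integrableOn_const_iff (Or.inr measure_ball_lt_top))
              ((hker_int x₀ hx₀far).mono_set htsub) measurableSet_ball hle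
    -- lower bound on the complement part
    have hvol_diff : (volume (ball c ε \ ball c' (ε/2))).toReal
        = ε^d * vd - (ε/2)^d * vd := by
      rw [measure_diff htsub measurableSet_ball.nullMeasurableSet measure_ball_lt_top.ne,
        ENNReal.toReal_sub_of_le (measure_mono htsub) measure_ball_lt_top.ne,
        hballvol _ hε.le, hballvol _ (by linarith : (0:ℝ) ≤ ε/2)]
    have hlow2 : (3*ε)^(α-(d:ℝ)) * (ε^d * vd - (ε/2)^d * vd)
        ≤ ∫ y in ball c ε \ ball c' (ε/2), ‖x₀ - y‖ ^ (α-(d:ℝ)) := by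
      have hle : ∀ z ∈ ball c ε \ ball c' (ε/2),
          (3*ε)^(α-(d:ℝ)) ≤ ‖x₀ - z‖ ^ (α-(d:ℝ)) := by
        intro z hz
        have h1 : ‖z - c‖ < ε := mem_ball_iff_norm.mp hz.1
        have h3 : ‖x₀ - z‖ ≤ ‖x₀ - c‖ + ‖c - z‖ := by
          simpa using norm_add_le (x₀ - c) (c - z)
        rw [norm_sub_rev c z, hxc] at h3
        have h4 : ‖x₀ - z‖ ≤ 3*ε := by linarith
        have h5 : (0:ℝ) < ‖x₀ - z‖ := lt_of_lt_of_le hε (hx₀far z hz.1)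
        exact Real.rpow_le_rpow_of_nonpos h5 h4 hs_neg.le
      calc (3*ε)^(α-(d:ℝ)) * (ε^d * vd - (ε/2)^d * vd)
          = ∫ _ in ball c ε \ ball c' (ε/2), (3*ε)^(α-(d:ℝ)) := by
            rw [setIntegral_const, smul_eq_mul, measureReal_def, hvol_diff]; ring
        _ ≤ ∫ y in ball c ε \ ball c' (ε/2), ‖x₀ - y‖ ^ (α-(d:ℝ)) := by
            refine setIntegral_mono_on ?_ ((hker_int x₀ hx₀far).mono_set diff_subset)
              (measurableSet_ball.diff measurableSet_ball) hle
            exact Iff.mpr integrableOn_const_iff (Or.inr (lt_of_le_of_lt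
              (measure_mono diff_subset) measure_ball_lt_top))
    -- combine: lower bound for the potential at x₀
    have hsplit := integral_inter_add_diff (μ := volume) (s := ball c ε)
      (t := ball c' (ε/2)) (f := fun y => ‖x₀ - y‖ ^ (α-(d:ℝ)))
      measurableSet_ball (hker_int x₀ hx₀far)
    have hinter : ball c ε ∩ ball c' (ε/2) = ball c' (ε/2) := inter_eq_right.mpr htsub
    have hlowx₀ : (2*ε)^(α-(d:ℝ)) * ((ε/2)^d * vd)
        + (3*ε)^(α-(d:ℝ)) * (ε^d * vd - (ε/2)^d * vd)
        ≤ RieszPot d α f x₀ := by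
      rw [hRf x₀, ← hsplit, hinter]
      exact add_le_add hlow1 hlow2
    -- upper bound for the potential at y₀
    have hupy₀ : RieszPot d α f y₀ ≤ (3*ε)^(α-(d:ℝ)) * (ε^d * vd) := by
      rw [hRf y₀]
      have hle : ∀ z ∈ ball c ε, ‖y₀ - z‖ ^ (α-(d:ℝ)) ≤ (3*ε)^(α-(d:ℝ)) := by
        intro z hz
        exact Real.rpow_le_rpow_of_nonpos (by linarith) (hy₀far z hz) hs_neg.le
      calc (∫ y in ball c ε, ‖y₀ - y‖ ^ (α-(d:ℝ)))
          ≤ ∫ _ in ball c ε, (3*ε)^(α-(d:ℝ)) := by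
            refine setIntegral_mono_on ?_
              (Iff.mpr integrableOn_const_iff (Or.inr measure_ball_lt_top)) measurableSet_ball hle
            refine hker_int y₀ fun z hz => le_trans (by linarith) (hy₀far z hz)
        _ = (3*ε)^(α-(d:ℝ)) * (ε^d * vd) := by
            rw [setIntegral_const, smul_eq_mul, measureReal_def, hballvol _ hε.le]; ring
    -- the gap
    have hgap : vd * c₀ * ε ^ α ≤ RieszPot d α f x₀ - RieszPot d α f y₀ := by
      have e1' : (2:ℝ)^(-(d:ℝ)) = ((2:ℝ)^(d:ℕ))⁻¹ := by
        rw [Real.rpow_neg (by norm_num), Real.rpow_natCast]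
      have e2 : (ε/2)^(d:ℕ) = ε^(d:ℕ) * ((2:ℝ)^(d:ℕ))⁻¹ := by
        rw [div_pow, div_eq_mul_inv]
      have e3 : ε^(d:ℕ) * ε^(α-(d:ℝ)) = ε^α := by
        rw [← Real.rpow_natCast ε d, ← Real.rpow_add hε]
        congr 1; ring
      have e4 : (2*ε)^(α-(d:ℝ)) = 2^(α-(d:ℝ)) * ε^(α-(d:ℝ)) :=
        Real.mul_rpow (by norm_num) hε.le
      have e5 : (3*ε)^(α-(d:ℝ)) = 3^(α-(d:ℝ)) * ε^(α-(d:ℝ)) :=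
        Real.mul_rpow (by norm_num) hε.le
      have key : vd * c₀ * ε ^ α
          = (2*ε)^(α-(d:ℝ)) * ((ε/2)^d * vd)
            + (3*ε)^(α-(d:ℝ)) * (ε^d * vd - (ε/2)^d * vd)
            - (3*ε)^(α-(d:ℝ)) * (ε^d * vd) := by
        rw [e4, e5, e2, hc₀def, e1', ← e3]; ring
      rw [key]
      linarith [hlowx₀, hupy₀]
    -- global bounds on the potential
    set Iε : ℝ := ∫ w in ball (0:EuclideanSpace ℝ (Fin d)) ε, ‖w‖^(α-(d:ℝ)) with hIεdef
    have hRbound : ∀ x, 0 ≤ RieszPot d α f x ∧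
        RieszPot d α f x ≤ Iε + ε^(α-(d:ℝ)) * (ε^d * vd) := by
      intro x
      rw [hRf x, kernel_translate]
      constructor
      · exact setIntegral_nonneg measurableSet_ball
          (fun w _ => Real.rpow_nonneg (norm_nonneg _) _)
      · have h := kernel_ball_upper hd hs_gt hs_neg (c - x) hε
        rwa [hballvol _ hε.le] at h
    -- lower bound for the modulus of continuity
    have homega : vd * c₀ * ε ^ α ≤ omegaE d (RieszPot d α f) (2*ε) := by
      set B : ℝ := Iε + ε^(α-(d:ℝ)) * (ε^d * vd) with hBdef
      have hbdd : BddAbove {v | ∃ x y : EuclideanSpace ℝ (Fin d),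
          ‖x - y‖ ≤ 2*ε ∧ v = |RieszPot d α f x - RieszPot d α f y|} := by
        refine ⟨2*B, ?_⟩
        rintro v ⟨x, y, -, rfl⟩
        obtain ⟨h1, h2⟩ := hRbound x
        obtain ⟨h3, h4⟩ := hRbound y
        rw [abs_le]
        constructor <;> linarith
      have hmem : |RieszPot d α f x₀ - RieszPot d α f y₀| ∈ {v | ∃ x y : EuclideanSpace ℝ (Fin d),
          ‖x - y‖ ≤ 2*ε ∧ v = |RieszPot d α f x - RieszPot d α f y|} :=
        ⟨x₀, y₀, le_of_eq hxy, rfl⟩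
      calc vd * c₀ * ε ^ α ≤ RieszPot d α f x₀ - RieszPot d α f y₀ := hgap
        _ ≤ |RieszPot d α f x₀ - RieszPot d α f y₀| := le_abs_self _
        _ ≤ omegaE d (RieszPot d α f) (2*ε) := le_csSup hbdd hmem
    -- the two integrability hypotheses of H
    have hw_eq : (fun y => (1+‖y‖)^(α-(d:ℝ)) * |f y|)
        = (ball c ε).indicator (fun y => (1+‖y‖)^(α-(d:ℝ))) := by
      funext y
      by_cases hy : y ∈ ball c ε
      · simp [hfdef, indicator_of_mem hy]
      · simp [hfdef, indicator_of_notMem hy]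
    have hwIntOn : IntegrableOn (fun y => (1+‖y‖)^(α-(d:ℝ))) (ball c ε) := by
      refine Measure.integrableOn_of_bounded (M := 1) measure_ball_lt_top.ne
        ((Measurable.aestronglyMeasurable (by fun_prop))) ?_
      refine Eventually.of_forall fun z => ?_
      rw [Real.norm_of_nonneg (Real.rpow_nonneg (by positivity) _)]
      exact Real.rpow_le_one_of_one_le_of_nonpos (by linarith [norm_nonneg z]) hs_neg.le
    have hI1 : Integrable (fun y => (1+‖y‖)^(α-(d:ℝ)) * |f y|) := by
      rw [hw_eq]
      exact hwIntOn.integrable_indicator measurableSet_ball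
    have hp_eq : (fun y => |f y|^p) = (ball c ε).indicator (fun _ => (1:ℝ)) := by
      funext y
      by_cases hy : y ∈ ball c ε
      · simp [hfdef, indicator_of_mem hy]
      · simp [hfdef, indicator_of_notMem hy, Real.zero_rpow hp0.ne']
    have hI2 : Integrable (fun y => |f y|^p) := by
      rw [hp_eq]
      exact (Iff.mpr integrableOn_const_iff (Or.inr measure_ball_lt_top)).integrable_indicator
        measurableSet_ball
    -- bound on the mixed norm
    have hwb : (∫ y, (1+‖y‖)^(α-(d:ℝ)) * |f y|) ≤ vd * ε^q := by
      rw [hw_eq, integral_indicator measurableSet_ball]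
      have hle : ∀ z ∈ ball c ε, (1+‖z‖)^(α-(d:ℝ)) ≤ S^(α-(d:ℝ)) := by
        intro z hz
        have h1 : ‖c‖ = S + ε := by
          rw [hcdef, norm_smul, he₁, mul_one, Real.norm_eq_abs, abs_of_pos (by linarith)]
        have h2 : ‖c - z‖ < ε := by
          rw [norm_sub_rev]; exact mem_ball_iff_norm.mp hz
        have h3 : ‖c‖ ≤ ‖c - z‖ + ‖z‖ := by
          simpa using norm_add_le (c - z) z
        have h4 : S ≤ 1 + ‖z‖ := by rw [h1] at h3; linarith
        exact Real.rpow_le_rpow_of_nonpos hS0 h4 hs_neg.le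
      calc (∫ z in ball c ε, (1+‖z‖)^(α-(d:ℝ)))
          ≤ ∫ _ in ball c ε, S^(α-(d:ℝ)) :=
            setIntegral_mono_on hwIntOn
              (Iff.mpr integrableOn_const_iff (Or.inr measure_ball_lt_top)) measurableSet_ball hle
        _ = ε^d * vd * S^(α-(d:ℝ)) := by
            rw [setIntegral_const, smul_eq_mul, measureReal_def, hballvol _ hε.le]
        _ ≤ ε^d * vd * ε^(q-(d:ℝ)) := by
            refine mul_le_mul_of_nonneg_left hSs (by positivity)
        _ = vd * ε^q := by
            have hdq : ε^(d:ℕ) * ε^(q-(d:ℝ)) = ε^q := by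
              rw [← Real.rpow_natCast ε d, ← Real.rpow_add hε]; congr 1; ring
            calc ε^d * vd * ε^(q-(d:ℝ)) = vd * (ε^(d:ℕ) * ε^(q-(d:ℝ))) := by ring
              _ = vd * ε^q := by rw [hdq]
    have hLpb : LpNormE d p f ≤ vd^(1/p) * ε^q := by
      have hint : (∫ y, |f y|^p) = ε^d * vd := by
        rw [hp_eq, integral_indicator measurableSet_ball, setIntegral_const, smul_eq_mul,
          measureReal_def, mul_one, hballvol _ hε.le]
      rw [LpNormE, hint, Real.mul_rpow (by positivity) hvd.le]
      rw [← Real.rpow_natCast ε d, ← Real.rpow_mul hε.le]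
      rw [mul_comm]
      have : (d:ℝ) * (1/p) = q := by rw [hqdef]; ring
      rw [this]
    have hmix : mixedNorm d α p f ≤ Cm * ε^q := by
      rw [mixedNorm]
      have hεq : (0:ℝ) ≤ ε^q := Real.rpow_nonneg hε.le q
      refine max_le ?_ ?_
      · exact le_trans hwb (mul_le_mul_of_nonneg_right (le_max_left _ _) hεq)
      · exact le_trans hLpb (mul_le_mul_of_nonneg_right (le_max_right _ _) hεq)
    -- apply the hypothesis
    have hH := H f hI1 hI2 (2*ε) (mul_nonneg (by norm_num) hε.le)
    calc vd * c₀ * ε ^ α ≤ omegaE d (RieszPot d α f) (2*ε) := homega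
      _ ≤ K * (2*ε)^ν * mixedNorm d α p f := hH
      _ ≤ K * (2*ε)^ν * (Cm * ε^q) := by
          refine mul_le_mul_of_nonneg_left hmix ?_
          positivity
  have hA : ∀ ε : ℝ, 0 < ε → ε ^ (α - ν - q) ≤ (K * 2^ν * Cm) / (vd * c₀) := by
    intro ε hε
    have h := main ε hε
    have h2 : (2*ε)^ν = 2^ν * ε^ν := Real.mul_rpow (by norm_num) hε.le
    have h3 : ε^α = (ε^ν * ε^q) * ε^(α-ν-q) := by
      rw [← Real.rpow_add hε, ← Real.rpow_add hε]; congr 1; ring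
    rw [h2, h3] at h
    have hεν : 0 < ε^ν := Real.rpow_pos_of_pos hε ν
    have hεq : 0 < ε^q := Real.rpow_pos_of_pos hε q
    rw [le_div_iff₀ (mul_pos hvd hc₀)]
    refine le_of_mul_le_mul_right ?_ (mul_pos hεν hεq)
    calc ε ^ (α - ν - q) * (vd * c₀) * (ε^ν * ε^q)
        = vd * c₀ * (ε^ν * ε^q * ε^(α-ν-q)) := by ring
      _ ≤ K * (2^ν * ε^ν) * (Cm * ε^q) := h
      _ = K * 2^ν * Cm * (ε^ν * ε^q) := by ring
  set A : ℝ := (K * 2^ν * Cm) / (vd * c₀) with hAdef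
  have hA0 : 0 < A := div_pos (by positivity) (mul_pos hvd hc₀)
  by_contra hne
  have ht : α - ν - q ≠ 0 := by
    intro h0
    exact hne (by linarith)
  set ε₀ : ℝ := (A+1) ^ (α - ν - q)⁻¹ with hε₀def
  have hε₀ : 0 < ε₀ := Real.rpow_pos_of_pos (by linarith) _
  have hpow : ε₀ ^ (α - ν - q) = A + 1 := by
    rw [hε₀def, ← Real.rpow_mul (by linarith : (0:ℝ) ≤ A+1), inv_mul_cancel₀ ht, Real.rpow_one]
  have h5 := hA ε₀ hε₀
  rw [hpow] at h5
  linarith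
end

section
/- (Theorem 5.2.) Let d ≥ 1, 0 < α < d, γ > 0, and d/α < A₁ < B₁ ≤ ∞, and let ζ : (A₁,B₁) → (0,∞). Let f : ℝ^d → ℝ be measurable with ∫_{ℝ^d} |f(y)| |x−y|^{α−d} dy < ∞ for all x, and suppose that for every p ∈ (A₁,B₁) and every h ∈ (0, 1/e) one has ω(R_α[f], h) ≤ ζ(p) · h^{α − d/p} · |ln h|^{γ/p}. Then for every h ∈ (0, 1/e), ω(R_α[f], h) ≤ h^α / φ(Gζ, h^d · |ln h|^{−γ}), where φ(Gζ, δ) = sup_{p ∈ (A₁,B₁)} δ^{1/p} / ζ(p). -/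
open MeasureTheory Set

/-- The fundamental function `φ(Gζ, δ) = sup_{p ∈ (A,B)} δ^(1/p)/ζ(p)`. -/
noncomputable def fundFun (A : ℝ) (B : EReal) (ζ : ℝ → ℝ) (δ : ℝ) : ℝ :=
  sSup {v | ∃ p : ℝ, A < p ∧ (p : EReal) < B ∧ v = δ ^ (1 / p) / ζ p}

theorem grand_lebesgue_modulus_bound_log (d : ℕ) (hd : 1 ≤ d) (α γ A₁ : ℝ) (B₁ : EReal)
    (hα : 0 < α ∧ α < d) (hγ : 0 < γ) (hA : (d : ℝ) / α < A₁) (hAB : (A₁ : EReal) < B₁)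
    (ζ : ℝ → ℝ) (hζ : ∀ p : ℝ, A₁ < p → (p : EReal) < B₁ → 0 < ζ p)
    (f : EuclideanSpace ℝ (Fin d) → ℝ)
    (hf : ∀ x : EuclideanSpace ℝ (Fin d),
      MeasureTheory.Integrable fun y => |f y| * ‖x - y‖ ^ (α - d))
    (H : ∀ p : ℝ, A₁ < p → (p : EReal) < B₁ → ∀ h ∈ Set.Ioo (0:ℝ) (Real.exp 1)⁻¹,
      omegaE d (RieszPot d α f) h ≤ ζ p * h ^ (α - (d : ℝ) / p) * |Real.log h| ^ (γ / p)) :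
    ∀ h ∈ Set.Ioo (0:ℝ) (Real.exp 1)⁻¹,
      omegaE d (RieszPot d α f) h
        ≤ h ^ α / fundFun A₁ B₁ ζ (h ^ (d : ℝ) * |Real.log h| ^ (-γ)) := by
  obtain ⟨hα0, hαd⟩ := hα
  intro h hh
  obtain ⟨hh1, hh2⟩ := hh
  set L : ℝ := |Real.log h| with hL
  have hlog : Real.log h < -1 := by
    have := Real.log_lt_log hh1 hh2
    rwa [Real.log_inv, Real.log_exp] at this
  have hL1 : 1 < L := by
    rw [hL, abs_of_neg (by linarith)]; linarith
  have hL0 : 0 < L := by linarith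
  set δ : ℝ := h ^ (d : ℝ) * L ^ (-γ) with hδ
  have hδ0 : 0 < δ := by positivity
  have hA0 : 0 < A₁ := lt_trans (by positivity) hA
  -- key identity
  have key : ∀ p : ℝ, A₁ < p → (p : EReal) < B₁ →
      ζ p * h ^ (α - (d : ℝ) / p) * L ^ (γ / p) = h ^ α / (δ ^ (1 / p) / ζ p) := by
    intro p hp1 hp2
    have hp0 : 0 < p := lt_trans hA0 hp1
    have hζp : 0 < ζ p := hζ p hp1 hp2
    have hδp : δ ^ (1 / p) = h ^ ((d : ℝ) / p) * L ^ (-(γ / p)) := by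
      rw [hδ, Real.mul_rpow (by positivity) (by positivity),
        ← Real.rpow_mul hh1.le, ← Real.rpow_mul hL0.le]
      ring_nf
    rw [hδp, Real.rpow_sub hh1, Real.rpow_neg hL0.le]
    have h1 : (0:ℝ) < h ^ ((d : ℝ) / p) := by positivity
    have h2 : (0:ℝ) < L ^ (γ / p) := by positivity
    field_simp
  have hbound : ∀ p : ℝ, A₁ < p → (p : EReal) < B₁ →
      omegaE d (RieszPot d α f) h ≤ h ^ α / (δ ^ (1 / p) / ζ p) := by
    intro p hp1 hp2
    have := H p hp1 hp2 h ⟨hh1, hh2⟩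
    rwa [key p hp1 hp2] at this
  set S : Set ℝ := {v | ∃ p : ℝ, A₁ < p ∧ (p : EReal) < B₁ ∧ v = δ ^ (1 / p) / ζ p} with hS
  have hfund : fundFun A₁ B₁ ζ δ = sSup S := rfl
  obtain ⟨p₀, hp₀1, hp₀2⟩ := EReal.exists_between_coe_real hAB
  have hp₀1' : A₁ < p₀ := by exact_mod_cast hp₀1
  have hsp₀ : (0:ℝ) < δ ^ (1 / p₀) / ζ p₀ := by
    have := hζ p₀ hp₀1' hp₀2; positivity
  have hmem₀ : δ ^ (1 / p₀) / ζ p₀ ∈ S := ⟨p₀, hp₀1', hp₀2, rfl⟩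
  have hhα : (0:ℝ) < h ^ α := by positivity
  rw [hfund]
  by_cases hbdd : BddAbove S
  · have hφ : 0 < sSup S := lt_of_lt_of_le hsp₀ (le_csSup hbdd hmem₀)
    by_cases hω : omegaE d (RieszPot d α f) h ≤ 0
    · exact le_trans hω (by positivity)
    · push_neg at hω
      have hsup : sSup S ≤ h ^ α / omegaE d (RieszPot d α f) h := by
        apply Real.sSup_le _ (by positivity)
        rintro v ⟨p, hp1, hp2, rfl⟩
        have hsp : (0:ℝ) < δ ^ (1 / p) / ζ p := by
          have := hζ p hp1 hp2; positivity
        have h1 := hbound p hp1 hp2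
        rw [le_div_iff₀ hω]
        rw [le_div_iff₀ hsp] at h1
        linarith [h1]
      rw [le_div_iff₀ hφ]
      rw [le_div_iff₀ hω] at hsup
      linarith [hsup]
  · rw [Real.sSup_of_not_bddAbove hbdd, div_zero]
    refine le_of_forall_pos_le_add ?_
    intro ε hε
    rw [zero_add]
    obtain ⟨v, hv, hvlt⟩ := not_bddAbove_iff.1 hbdd (h ^ α / ε)
    obtain ⟨p, hp1, hp2, rfl⟩ := hv
    have hsp : (0:ℝ) < δ ^ (1 / p) / ζ p := by
      have := hζ p hp1 hp2; positivity
    refine le_trans (hbound p hp1 hp2) ?_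
    rw [div_le_iff₀ hsp]
    rw [div_lt_iff₀ hε] at hvlt
    linarith
end
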